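/- arXiv:1305.6842 — 5 statements merged into one kernel-verified Lean document; each statement's English description precedes it below -/
import Mathlib

section
/- Let S be a semigroup whose kernel is the Rees matrix semigroup K = Λ × G × I over a group G with normalized sandwich matrix P. Then for every α ∈ S there exist g_α ∈ G and maps Λ_α : Λ → Λ, I_α : I → I such that for all λ ∈ Λ, g ∈ G, i ∈ I: α·(λ,g,i) = (Λ_α(λ), g_α · P(I_α(i₀), λ) · g, i) and (λ,g,i)·α = (λ, g · P(i, Λ_α(λ₀)) · g_α, I_α(i)). -/
/-- Rees matrix multiplication on `Λ × G × I` with sandwich matrix `P`. -/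
def reesMul {G L J : Type*} [Group G] (P : J → L → G) :
    L × G × J → L × G × J → L × G × J :=
  fun a b => (a.1, a.2.1 * P a.2.2 b.1 * b.2.1, b.2.2)

/-- For every `α ∈ S` there exist `g_α ∈ G` and maps `Λ_α : Λ → Λ`, `I_α : I → I` such that
`α·(λ,g,i) = (Λ_α(λ), g_α·P(I_α(i₀),λ)·g, i)` and
`(λ,g,i)·α = (λ, g·P(i,Λ_α(λ₀))·g_α, I_α(i))`. -/
theorem stmt9 {S G L J : Type*} [Semigroup S] [Group G] (P : J → L → G)
    (l₀ : L) (i₀ : J)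
    (hrow : ∀ l : L, P i₀ l = 1) (hcol : ∀ i : J, P i l₀ = 1)
    (ι : L × G × J → S) (hinj : Function.Injective ι)
    (hmul : ∀ a b : L × G × J, ι (reesMul P a b) = ι a * ι b)
    (hideal : ∀ s : S, ∀ k : L × G × J,
      s * ι k ∈ Set.range ι ∧ ι k * s ∈ Set.range ι)
    (hmin : ∀ T : Set S, T.Nonempty →
      (∀ s : S, ∀ a ∈ T, s * a ∈ T ∧ a * s ∈ T) → Set.range ι ⊆ T) :
    ∀ α : S, ∃ (gα : G) (La : L → L) (Ia : J → J),
      ∀ (l : L) (g : G) (i : J),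
        α * ι (l, g, i) = ι (La l, gα * P (Ia i₀) l * g, i) ∧
        ι (l, g, i) * α = ι (l, g * P i (La l₀) * gα, Ia i) := by
  intro α
  choose f hf using fun l : L => (hideal α (l, 1, i₀)).1
  choose r hr using fun i : J => (hideal α (l₀, 1, i)).2
  -- left multiplication formula
  have hleft : ∀ (l : L) (g : G) (i : J),
      α * ι (l, g, i) = ι ((f l).1, (f l).2.1 * g, i) := by
    intro l g i
    have h1 : (l, g, i) = reesMul P (l, (1:G), i₀) (l₀, g, i) := by
      simp [reesMul, hrow]
    rw [h1, hmul, ← mul_assoc, ← hf, ← hmul]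
    simp [reesMul, hcol]
  -- right multiplication formula
  have hright : ∀ (l : L) (g : G) (i : J),
      ι (l, g, i) * α = ι (l, g * (r i).2.1, (r i).2.2) := by
    intro l g i
    have h1 : (l, g, i) = reesMul P (l, g, i₀) (l₀, (1:G), i) := by
      simp [reesMul, hrow]
    rw [h1, hmul, mul_assoc, ← hr, ← hmul]
    simp [reesMul, hrow]
  -- Fact A: compute (l₀,1,i₀) * (α * (l,1,i₀)) two ways
  have factA : ∀ l : L,
      (f l).2.1 = (r i₀).2.1 * P ((r i₀).2.2) l ∧ (f l).2.2 = i₀ := by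
    intro l
    have key : ι (l₀, (f l).2.1, (f l).2.2)
        = ι (l₀, (r i₀).2.1 * P ((r i₀).2.2) l, i₀) := by
      calc ι (l₀, (f l).2.1, (f l).2.2)
          = ι (reesMul P (l₀, (1:G), i₀) (f l)) := by simp [reesMul, hrow]
        _ = ι (l₀, (1:G), i₀) * ι (f l) := hmul _ _
        _ = ι (l₀, (1:G), i₀) * (α * ι (l, (1:G), i₀)) := by rw [← hf]
        _ = ι (l₀, (1:G), i₀) * α * ι (l, (1:G), i₀) := (mul_assoc _ _ _).symm
        _ = ι (l₀, 1 * (r i₀).2.1, (r i₀).2.2) * ι (l, (1:G), i₀) := by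
              rw [hright]
        _ = ι (reesMul P (l₀, 1 * (r i₀).2.1, (r i₀).2.2) (l, (1:G), i₀)) :=
              (hmul _ _).symm
        _ = ι (l₀, (r i₀).2.1 * P ((r i₀).2.2) l, i₀) := by simp [reesMul]
    have := hinj key
    simpa [Prod.ext_iff] using this
  -- Fact B: compute (l₀,1,i) * (α * (l₀,1,i₀)) two ways
  have factB : ∀ i : J, (r i).2.1 = P i ((f l₀).1) * (f l₀).2.1 := by
    intro i
    have key : ι (l₀, P i ((f l₀).1) * (f l₀).2.1, (f l₀).2.2)
        = ι (l₀, (r i).2.1, i₀) := by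
      calc ι (l₀, P i ((f l₀).1) * (f l₀).2.1, (f l₀).2.2)
          = ι (reesMul P (l₀, (1:G), i) (f l₀)) := by simp [reesMul]
        _ = ι (l₀, (1:G), i) * ι (f l₀) := hmul _ _
        _ = ι (l₀, (1:G), i) * (α * ι (l₀, (1:G), i₀)) := by rw [← hf]
        _ = ι (l₀, (1:G), i) * α * ι (l₀, (1:G), i₀) := (mul_assoc _ _ _).symm
        _ = ι (l₀, 1 * (r i).2.1, (r i).2.2) * ι (l₀, (1:G), i₀) := by
              rw [hright]
        _ = ι (reesMul P (l₀, 1 * (r i).2.1, (r i).2.2) (l₀, (1:G), i₀)) :=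
              (hmul _ _).symm
        _ = ι (l₀, (r i).2.1, i₀) := by simp [reesMul, hcol]
    have := hinj key
    simp [Prod.ext_iff] at this; exact this.1.symm
  have hfl₀ : (f l₀).2.1 = (r i₀).2.1 := by
    rw [(factA l₀).1, hcol, mul_one]
  refine ⟨(r i₀).2.1, fun l => (f l).1, fun i => (r i).2.2, fun l g i => ⟨?_, ?_⟩⟩
  · rw [hleft, (factA l).1]
  · rw [hright, factB i, hfl₀, mul_assoc]
end

section
/- Let S = Λ × G × I be a Rees matrix semigroup over a group G with normalized sandwich matrix P whose rows are pairwise distinct as functions Λ → G (nonsingular in rows). Suppose α, β ∈ S act on S with α(λ,g,i) = (Λ_α(λ), g_α g', i)-type translations where the data (g_α, Λ_α) ≠ (g_β, Λ_β) at some λ. Then there exist elements u, v ∈ S with u·α·v ≠ u·β·v, where u ∈ {λ₀}×G×I and v ∈ Λ×G×{i₀}; in particular, a product of the form (λ₀,1,i)·x·(λ,1,i₀) separates α and β and its values lie in Γ = {λ₀}×G×{i₀}. -/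
/-- If the sandwich matrix `P` is nonsingular and `α, β` induce different translation data
`(g_α, Λ_α) ≠ (g_β, Λ_β)` on the kernel, then a product of the form
`(λ₀,1,i)·x·(λ,1,i₀)` separates `α` and `β` and its values lie in `Γ = {λ₀}×G×{i₀}`. -/
theorem stmt15 {S G L J : Type*} [Semigroup S] [Group G] (P : J → L → G)
    (l₀ : L) (i₀ : J)
    (hrow : ∀ l : L, P i₀ l = 1) (hcol : ∀ i : J, P i l₀ = 1)
    (hnsrow : ∀ i j : J, (∀ l : L, P i l = P j l) → i = j)
    (hnscol : ∀ l m : L, (∀ i : J, P i l = P i m) → l = m)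
    (ι : L × G × J → S) (hinj : Function.Injective ι)
    (hmul : ∀ a b : L × G × J, ι (reesMul P a b) = ι a * ι b)
    (hideal : ∀ s : S, ∀ k : L × G × J,
      s * ι k ∈ Set.range ι ∧ ι k * s ∈ Set.range ι)
    (α β : S) (gα gβ : G) (Lα Lβ : L → L)
    (hα : ∀ (l : L) (g : G) (i : J), α * ι (l, g, i) = ι (Lα l, gα * g, i))
    (hβ : ∀ (l : L) (g : G) (i : J), β * ι (l, g, i) = ι (Lβ l, gβ * g, i))
    (hdiff : gα ≠ gβ ∨ ∃ l : L, Lα l ≠ Lβ l) :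
    ∃ (i : J) (l : L),
      ι (l₀, 1, i) * α * ι (l, 1, i₀) ≠ ι (l₀, 1, i) * β * ι (l, 1, i₀) ∧
      (∃ g : G, ι (l₀, 1, i) * α * ι (l, 1, i₀) = ι (l₀, g, i₀)) ∧
      (∃ g : G, ι (l₀, 1, i) * β * ι (l, 1, i₀) = ι (l₀, g, i₀)) := by
  obtain ⟨i, l, hne⟩ : ∃ i l, P i (Lα l) * gα ≠ P i (Lβ l) * gβ := by
    by_contra h
    push_neg at h
    have hg : gα = gβ := by simpa [hrow] using h i₀ l₀
    rcases hdiff with h1 | ⟨l, hl⟩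
    · exact h1 hg
    · refine hl (hnscol _ _ fun i => ?_)
      have := h i l
      rw [hg] at this
      exact mul_right_cancel this
  have eα : ι (l₀, 1, i) * α * ι (l, 1, i₀) = ι (l₀, P i (Lα l) * gα, i₀) := by
    rw [mul_assoc, hα, ← hmul]
    simp [reesMul]
  have eβ : ι (l₀, 1, i) * β * ι (l, 1, i₀) = ι (l₀, P i (Lβ l) * gβ, i₀) := by
    rw [mul_assoc, hβ, ← hmul]
    simp [reesMul]
  refine ⟨i, l, ?_, ⟨_, eα⟩, ⟨_, eβ⟩⟩
  rw [eα, eβ]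
  intro h
  exact hne (by simpa using hinj h)
end

section
/- Let S be a semigroup with a two-sided ideal I containing at least two elements, and suppose for every 4-tuple P = (p₁,p₂,p₃,p₄) ∈ S⁴ with p₁ ≠ p₂ and p₃ ≠ p₄ there is a pair of terms (t_P, s_P) in variables x₁,…,x₄ with constants in S such that t_P = s_P holds at every point of M = {(x₁,x₂,x₃,x₄) : x₁ = x₂ or x₃ = x₄} but fails at P. If there exist distinct α, β ∈ S with αx = βx and xα = xβ for all x ∈ I, then one of these equations t_P = s_P, for P = (α,β,r₁,r₂) with distinct r₁, r₂ ∈ I, both holds and fails at P — a contradiction. Hence: if such α ≠ β exist, then M is not the solution set of any system of equations over S. -/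
/-- A term over `S` in `n` variables: a nonempty list of factors, each a variable or constant. -/
structure SemigroupTerm (S : Type*) (n : ℕ) where
  head : Fin n ⊕ S
  tail : List (Fin n ⊕ S)

/-- Left-to-right product of a nonempty list in a semigroup. -/
def prodList {S : Type*} [Semigroup S] : S → List S → S
  | a, [] => a
  | a, b :: l => prodList (a * b) l

/-- Evaluation of a term at a point `X`. -/
def SemigroupTerm.eval {S : Type*} [Semigroup S] {n : ℕ}
    (t : SemigroupTerm S n) (X : Fin n → S) : S :=
  prodList (Sum.elim X id t.head) (t.tail.map (Sum.elim X id))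

section Aux

variable {S : Type*} [Semigroup S] (I : Set S)

/-- `I`-equivalence of two elements. -/
def Erel (a b : S) : Prop := ∀ x ∈ I, a * x = b * x ∧ x * a = x * b

lemma erel_refl (a : S) : Erel I a a := fun _ _ => ⟨rfl, rfl⟩

lemma Erel.symm' {a b : S} (h : Erel I a b) : Erel I b a :=
  fun x hx => ⟨((h x hx).1).symm, ((h x hx).2).symm⟩

lemma Erel.mul (hI : ∀ s : S, ∀ a ∈ I, s * a ∈ I ∧ a * s ∈ I) {a b c d : S} (h1 : Erel I a b) (h2 : Erel I c d) :
    Erel I (a * c) (b * d) := by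
  intro x hx
  constructor
  · have hcx : c * x ∈ I := (hI c x hx).1
    calc a * c * x = a * (c * x) := mul_assoc ..
      _ = b * (c * x) := (h1 _ hcx).1
      _ = b * (d * x) := by rw [(h2 x hx).1]
      _ = b * d * x := (mul_assoc ..).symm
  · have hxb : x * b ∈ I := (hI b x hx).2
    calc x * (a * c) = (x * a) * c := (mul_assoc ..).symm
      _ = (x * b) * c := by rw [(h1 x hx).2]
      _ = (x * b) * d := (h2 _ hxb).2
      _ = x * (b * d) := mul_assoc ..

lemma forall₂_map_of (el el' : (Fin 4 ⊕ S) → S)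
    (h : ∀ f, Erel I (el f) (el' f)) (l : List (Fin 4 ⊕ S)) :
    List.Forall₂ (Erel I) (l.map el) (l.map el') := by
  induction l with
  | nil => exact .nil
  | cons a l ih => exact .cons (h a) ih

lemma prodList_E (hI : ∀ s : S, ∀ a ∈ I, s * a ∈ I ∧ a * s ∈ I) {a b : S} (hab : Erel I a b) {l₁ l₂ : List S}
    (h : List.Forall₂ (Erel I) l₁ l₂) : Erel I (prodList a l₁) (prodList b l₂) := by
  induction h generalizing a b with
  | nil => exact hab
  | cons hc _ ih => exact ih (Erel.mul I hI hab hc)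

lemma prodList_eq_of_mem (hI : ∀ s : S, ∀ a ∈ I, s * a ∈ I ∧ a * s ∈ I) {a : S} (ha : a ∈ I) {l₁ l₂ : List S}
    (h : List.Forall₂ (Erel I) l₁ l₂) : prodList a l₁ = prodList a l₂ := by
  induction h generalizing a with
  | nil => rfl
  | @cons c d l₁ l₂ hc _ ih =>
      have h1 : a * c = a * d := (hc a ha).2
      have h2 : a * c ∈ I := (hI c a ha).2
      show prodList (a * c) _ = prodList (a * d) _
      rw [← h1]
      exact ih h2

lemma prodList_append (a : S) (l₁ l₂ : List S) :
    prodList a (l₁ ++ l₂) = prodList (prodList a l₁) l₂ := by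
  induction l₁ generalizing a with
  | nil => rfl
  | cons b l ih => exact ih (a * b)

/-- Swap lemma: if a term contains a factor which evaluates (equally at `X`, `X'`) into `I`,
and all coordinates are `Erel`-related, then the evaluations agree. -/
lemma eval_key (hI : ∀ s : S, ∀ a ∈ I, s * a ∈ I ∧ a * s ∈ I) (T : SemigroupTerm S 4) (X X' : Fin 4 → S)
    (hE : ∀ i, Erel I (X i) (X' i)) (k : Fin 4)
    (hk : X k = X' k) (hkI : X k ∈ I)
    (hocc : T.head = Sum.inl k ∨ Sum.inl k ∈ T.tail) :
    T.eval X = T.eval X' := by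
  have hEf : ∀ f : Fin 4 ⊕ S, Erel I (Sum.elim X id f) (Sum.elim X' id f) := by
    rintro (i | s)
    · exact hE i
    · exact erel_refl I _
  rcases hocc with h | h
  · unfold SemigroupTerm.eval
    rw [h]
    simp only [Sum.elim_inl]
    rw [hk]
    exact prodList_eq_of_mem I hI (hk ▸ hkI) (forall₂_map_of I _ _ hEf _)
  · obtain ⟨p, q, hpq⟩ := List.append_of_mem h
    unfold SemigroupTerm.eval
    rw [hpq, List.map_append, List.map_append, List.map_cons, List.map_cons,
      prodList_append, prodList_append]
    simp only [Sum.elim_inl]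
    set u := prodList (Sum.elim X id T.head) (p.map (Sum.elim X id)) with hu
    set v := prodList (Sum.elim X' id T.head) (p.map (Sum.elim X' id)) with hv
    have huv : Erel I u v := prodList_E I hI (hEf _) (forall₂_map_of I _ _ hEf _)
    have h1 : u * X k = v * X' k := by rw [← hk]; exact (huv _ hkI).1
    have h2 : u * X k ∈ I := (hI u (X k) hkI).1
    show prodList (u * X k) _ = prodList (v * X' k) _
    rw [← h1]
    exact prodList_eq_of_mem I hI h2 (forall₂_map_of I _ _ hEf _)

/-- Congruence lemma: evaluation only depends on the values of the factors. -/
lemma eval_cong (T : SemigroupTerm S 4) (X X' : Fin 4 → S)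
    (h : ∀ f, T.head = f ∨ f ∈ T.tail → Sum.elim X id f = Sum.elim X' id f) :
    T.eval X = T.eval X' := by
  unfold SemigroupTerm.eval
  rw [h T.head (Or.inl rfl),
    List.map_congr_left (fun f hf => h f (Or.inr hf))]

end Aux

/-- If a semigroup `S` has an ideal `I` with at least two elements and two distinct
`I`-equivalent elements `α ≠ β`, then the set
`M = {(x₁,x₂,x₃,x₄) : x₁ = x₂ or x₃ = x₄}` is not the solution set of any system of
equations over `S`. -/
theorem stmt16 {S : Type*} [Semigroup S] (I : Set S)
    (hI : ∀ s : S, ∀ a ∈ I, s * a ∈ I ∧ a * s ∈ I)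
    (r₁ r₂ : S) (hr₁ : r₁ ∈ I) (hr₂ : r₂ ∈ I) (hrr : r₁ ≠ r₂)
    (α β : S) (hab : α ≠ β)
    (hsim : ∀ x ∈ I, α * x = β * x ∧ x * α = x * β) :
    ¬∃ (ι : Type) (t s : ι → SemigroupTerm S 4),
      ∀ X : Fin 4 → S,
        (∀ j : ι, (t j).eval X = (s j).eval X) ↔ (X 0 = X 1 ∨ X 2 = X 3) := by
  classical
  rintro ⟨ι, t, s, h⟩
  set P : Fin 4 → S := ![α, β, r₁, r₂] with hPdef
  set B : Fin 4 → S := ![β, β, r₁, r₂] with hBdef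
  set B' : Fin 4 → S := ![β, β, r₁, r₁] with hB'def
  set Q : Fin 4 → S := ![α, β, r₁, r₁] with hQdef
  have hM : ∀ X : Fin 4 → S, (X 0 = X 1 ∨ X 2 = X 3) → ∀ j, (t j).eval X = (s j).eval X :=
    fun X hX j => (h X).mpr hX j
  obtain ⟨j, hj⟩ : ∃ j, (t j).eval P ≠ (s j).eval P := by
    by_contra hc
    push_neg at hc
    rcases (h P).mp hc with h1 | h2
    · exact hab (by simpa [hPdef] using h1)
    · exact hrr (by simpa [hPdef] using h2)
  have key2 : ∀ (T : SemigroupTerm S 4) (X X' : Fin 4 → S),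
      (∀ i, Erel I (X i) (X' i)) → X 2 = X' 2 → X 3 = X' 3 → X 2 ∈ I → X 3 ∈ I →
      ((T.head = Sum.inl 2 ∨ Sum.inl (2 : Fin 4) ∈ T.tail) ∨
        (T.head = Sum.inl 3 ∨ Sum.inl (3 : Fin 4) ∈ T.tail)) →
      T.eval X = T.eval X' := by
    intro T X X' hE h2 h3 h2I h3I hocc
    rcases hocc with hk | hk
    · exact eval_key I hI T X X' hE 2 h2 h2I hk
    · exact eval_key I hI T X X' hE 3 h3 h3I hk
  have congr3 : ∀ (T : SemigroupTerm S 4) (X X' : Fin 4 → S),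
      ¬ ((T.head = Sum.inl 2 ∨ Sum.inl (2 : Fin 4) ∈ T.tail) ∨
        (T.head = Sum.inl 3 ∨ Sum.inl (3 : Fin 4) ∈ T.tail)) →
      X 0 = X' 0 → X 1 = X' 1 → X 2 = X' 2 → T.eval X = T.eval X' := by
    intro T X X' hocc h0 h1 h2
    apply eval_cong
    rintro (i | c) hf
    · fin_cases i
      · simpa using h0
      · simpa using h1
      · simpa using h2
      · exact absurd (Or.inr hf) hocc
    · rfl
  have hEab : Erel I α β := hsim
  have hEbb : Erel I β β := erel_refl I β
  have mkE : ∀ (a b c d a' b' : S), Erel I a a' → Erel I b b' →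
      ∀ i, Erel I (![a, b, c, d] i) (![a', b', c, d] i) := by
    intro a b c d a' b' h0 h1 i
    fin_cases i
    · simpa using h0
    · simpa using h1
    · simpa using erel_refl I c
    · simpa using erel_refl I d
  have hEPB : ∀ i, Erel I (P i) (B i) := mkE α β r₁ r₂ β β hEab hEbb
  have hEQB' : ∀ i, Erel I (Q i) (B' i) := mkE α β r₁ r₁ β β hEab hEbb
  have hP2 : P 2 ∈ I := by simpa [hPdef] using hr₁
  have hP3 : P 3 ∈ I := by simpa [hPdef] using hr₂
  have hQ2 : Q 2 ∈ I := by simpa [hQdef] using hr₁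
  have hQ3 : Q 3 ∈ I := by simpa [hQdef] using hr₁
  have main : ∀ T S' : SemigroupTerm S 4,
      (∀ X : Fin 4 → S, (X 0 = X 1 ∨ X 2 = X 3) → T.eval X = S'.eval X) →
      ((T.head = Sum.inl 2 ∨ Sum.inl (2 : Fin 4) ∈ T.tail) ∨
        (T.head = Sum.inl 3 ∨ Sum.inl (3 : Fin 4) ∈ T.tail)) →
      T.eval P = S'.eval P := by
    intro T S' hMe hT
    have e1 : T.eval P = T.eval B :=
      key2 T P B hEPB (by simp [hPdef, hBdef]) (by simp [hPdef, hBdef]) hP2 hP3 hT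
    have e2 : T.eval B = S'.eval B := hMe B (Or.inl (by simp [hBdef]))
    rcases Classical.em ((S'.head = Sum.inl 2 ∨ Sum.inl (2 : Fin 4) ∈ S'.tail) ∨
        (S'.head = Sum.inl 3 ∨ Sum.inl (3 : Fin 4) ∈ S'.tail)) with hS | hS
    · have e3 : S'.eval P = S'.eval B :=
        key2 S' P B hEPB (by simp [hPdef, hBdef]) (by simp [hPdef, hBdef]) hP2 hP3 hS
      exact e1.trans (e2.trans e3.symm)
    · have e3 : S'.eval B = S'.eval B' :=
        congr3 S' B B' hS (by simp [hBdef, hB'def]) (by simp [hBdef, hB'def])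
          (by simp [hBdef, hB'def])
      have e4 : S'.eval B' = T.eval B' := (hMe B' (Or.inl (by simp [hB'def]))).symm
      have e5 : T.eval Q = T.eval B' :=
        key2 T Q B' hEQB' (by simp [hQdef, hB'def]) (by simp [hQdef, hB'def]) hQ2 hQ3 hT
      have e6 : T.eval Q = S'.eval Q := hMe Q (Or.inr (by simp [hQdef]))
      have e7 : S'.eval Q = S'.eval P :=
        congr3 S' Q P hS (by simp [hQdef, hPdef]) (by simp [hQdef, hPdef])
          (by simp [hQdef, hPdef])
      calc T.eval P = T.eval B := e1
        _ = S'.eval B := e2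
        _ = S'.eval B' := e3
        _ = T.eval B' := e4
        _ = T.eval Q := e5.symm
        _ = S'.eval Q := e6
        _ = S'.eval P := e7
  rcases Classical.em (((t j).head = Sum.inl 2 ∨ Sum.inl (2 : Fin 4) ∈ (t j).tail) ∨
      ((t j).head = Sum.inl 3 ∨ Sum.inl (3 : Fin 4) ∈ (t j).tail)) with hT | hT
  · exact hj (main (t j) (s j) (fun X hX => hM X hX j) hT)
  · rcases Classical.em (((s j).head = Sum.inl 2 ∨ Sum.inl (2 : Fin 4) ∈ (s j).tail) ∨
        ((s j).head = Sum.inl 3 ∨ Sum.inl (3 : Fin 4) ∈ (s j).tail)) with hS | hS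
    · exact hj ((main (s j) (t j) (fun X hX => (hM X hX j).symm) hS).symm)
    · have e1 : (t j).eval P = (t j).eval Q :=
        congr3 (t j) P Q hT (by simp [hPdef, hQdef]) (by simp [hPdef, hQdef])
          (by simp [hPdef, hQdef])
      have e2 : (t j).eval Q = (s j).eval Q := hM Q (Or.inr (by simp [hQdef])) j
      have e3 : (s j).eval Q = (s j).eval P :=
        congr3 (s j) Q P hS (by simp [hPdef, hQdef]) (by simp [hPdef, hQdef])
          (by simp [hPdef, hQdef])
      exact hj (e1.trans (e2.trans e3))
end

section
/- Any nontrivial semigroup S with a zero element is not an equational domain: the set M = {(x₁,x₂,x₃,x₄) ∈ S⁴ : x₁ = x₂ or x₃ = x₄} is not the solution set of any system of semigroup equations with constants in S. -/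
section Aux
variable {S : Type*} [Semigroup S] {z : S}

/-- Variable `i` occurs in the term `t`. -/
def occ {n : ℕ} (t : SemigroupTerm S n) (i : Fin n) : Prop :=
  t.head = Sum.inl i ∨ Sum.inl i ∈ t.tail

lemma prodList_z (hz : ∀ s : S, z * s = z ∧ s * z = z) :
    ∀ l : List S, prodList z l = z
  | [] => rfl
  | b :: l => by rw [prodList, (hz b).1]; exact prodList_z hz l

lemma prodList_mem_z (hz : ∀ s : S, z * s = z ∧ s * z = z) :
    ∀ (a : S) (l : List S), z ∈ l → prodList a l = z
  | a, b :: l, h => by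
    rcases List.mem_cons.mp h with h | h
    · rw [prodList, ← h, (hz a).2]; exact prodList_z hz l
    · rw [prodList]; exact prodList_mem_z hz _ l h

lemma eval_congr {n : ℕ} (t : SemigroupTerm S n) (X X' : Fin n → S)
    (h : ∀ i, occ t i → X i = X' i) : t.eval X = t.eval X' := by
  unfold SemigroupTerm.eval
  have hh : Sum.elim X id t.head = Sum.elim X' id t.head := by
    cases hHead : t.head with
    | inl i => simpa using h i (Or.inl hHead)
    | inr c => rfl
  have ht : t.tail.map (Sum.elim X id) = t.tail.map (Sum.elim X' id) := by
    apply List.map_congr_left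
    intro f hf
    cases f with
    | inl i => simpa using h i (Or.inr hf)
    | inr c => rfl
  rw [hh, ht]

lemma eval_z (hz : ∀ s : S, z * s = z ∧ s * z = z) {n : ℕ}
    (t : SemigroupTerm S n) (X : Fin n → S) (i : Fin n)
    (hi : occ t i) (hX : X i = z) : t.eval X = z := by
  unfold SemigroupTerm.eval
  rcases hi with h | h
  · rw [h]; simp only [Sum.elim_inl, hX]; exact prodList_z hz _
  · apply prodList_mem_z hz
    exact List.mem_map.mpr ⟨Sum.inl i, h, by simp [hX]⟩

/-- Key lemma: if the equation `T = Sq` holds on M, `T` contains variable 1 or 3,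
and `Sq` contains neither, then `Sq` evaluates to `z` at `(a,z,a,z)`. -/
lemma key (hz : ∀ s : S, z * s = z ∧ s * z = z) (a : S)
    (T Sq : SemigroupTerm S 4)
    (hE : ∀ X : Fin 4 → S, (X 0 = X 1 ∨ X 2 = X 3) → T.eval X = Sq.eval X)
    (hT : occ T 1 ∨ occ T 3) (hS1 : ¬ occ Sq 1) (hS3 : ¬ occ Sq 3) :
    Sq.eval ![a, z, a, z] = z := by
  classical
  by_cases hS0 : occ Sq 0
  · by_cases hS2 : occ Sq 2
    · -- Sq uses vars 0 and 2, not 1,3.  Split on which of 1,3 T uses.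
      rcases hT with hT1 | hT3
      · -- use B = (a,z,a,a) ∈ M
        have hB : T.eval ![a, z, a, a] = Sq.eval ![a, z, a, a] :=
          hE _ (Or.inr rfl)
        have hc : Sq.eval ![a, z, a, z] = Sq.eval ![a, z, a, a] := by
          apply eval_congr
          intro i hi
          fin_cases i <;> first | rfl | exact absurd hi hS3
        rw [hc, ← hB]
        exact eval_z hz _ _ 1 hT1 rfl
      · -- use B' = (a,a,a,z) ∈ M
        have hB : T.eval ![a, a, a, z] = Sq.eval ![a, a, a, z] :=
          hE _ (Or.inl rfl)
        have hc : Sq.eval ![a, z, a, z] = Sq.eval ![a, a, a, z] := by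
          apply eval_congr
          intro i hi
          fin_cases i <;> first | rfl | exact absurd hi hS1
        rw [hc, ← hB]
        exact eval_z hz _ _ 3 hT3 rfl
    · -- Sq doesn't use var 2 : use P = (a,z,z,z) ∈ M
      have hP : T.eval ![a, z, z, z] = Sq.eval ![a, z, z, z] :=
        hE _ (Or.inr rfl)
      have hc : Sq.eval ![a, z, a, z] = Sq.eval ![a, z, z, z] := by
        apply eval_congr
        intro i hi
        fin_cases i <;> first | rfl | exact absurd hi hS1 | exact absurd hi hS2
      rw [hc, ← hP]
      rcases hT with hT1 | hT3
      · exact eval_z hz _ _ 1 hT1 rfl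
      · exact eval_z hz _ _ 3 hT3 rfl
  · -- Sq doesn't use var 0 : use Q = (z,z,a,z) ∈ M
    have hQ : T.eval ![z, z, a, z] = Sq.eval ![z, z, a, z] :=
      hE _ (Or.inl rfl)
    have hc : Sq.eval ![a, z, a, z] = Sq.eval ![z, z, a, z] := by
      apply eval_congr
      intro i hi
      fin_cases i <;> first | rfl | exact absurd hi hS0
    rw [hc, ← hQ]
    rcases hT with hT1 | hT3
    · exact eval_z hz _ _ 1 hT1 rfl
    · exact eval_z hz _ _ 3 hT3 rfl

end Aux

/-- A nontrivial semigroup with a zero is not an equational domain: the set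
`M = {(x₁,x₂,x₃,x₄) : x₁ = x₂ or x₃ = x₄}` is not the solution set of any system of
equations with constants in `S`. -/
theorem stmt17 {S : Type*} [Semigroup S] (z : S)
    (hz : ∀ s : S, z * s = z ∧ s * z = z) (hnt : ∃ s : S, s ≠ z) :
    ¬∃ (ι : Type) (t s : ι → SemigroupTerm S 4),
      ∀ X : Fin 4 → S,
        (∀ j : ι, (t j).eval X = (s j).eval X) ↔ (X 0 = X 1 ∨ X 2 = X 3) := by
  classical
  rintro ⟨ι, t, s, H⟩
  obtain ⟨a, ha⟩ := hnt
  set Y : Fin 4 → S := ![a, z, a, z] with hY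
  have hall : ∀ j : ι, (t j).eval Y = (s j).eval Y := by
    intro j
    have hE : ∀ X : Fin 4 → S, (X 0 = X 1 ∨ X 2 = X 3) →
        (t j).eval X = (s j).eval X := fun X hX => (H X).mpr hX j
    by_cases hT : occ (t j) 1 ∨ occ (t j) 3
    · by_cases hS : occ (s j) 1 ∨ occ (s j) 3
      · -- both evaluate to z at Y
        have h1 : (t j).eval Y = z := by
          rcases hT with h | h
          · exact eval_z hz _ _ 1 h rfl
          · exact eval_z hz _ _ 3 h rfl
        have h2 : (s j).eval Y = z := by
          rcases hS with h | h
          · exact eval_z hz _ _ 1 h rfl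
          · exact eval_z hz _ _ 3 h rfl
        rw [h1, h2]
      · push_neg at hS
        have h1 : (t j).eval Y = z := by
          rcases hT with h | h
          · exact eval_z hz _ _ 1 h rfl
          · exact eval_z hz _ _ 3 h rfl
        have h2 : (s j).eval Y = z := key hz a _ _ hE hT hS.1 hS.2
        rw [h1, h2]
    · by_cases hS : occ (s j) 1 ∨ occ (s j) 3
      · push_neg at hT
        have hE' : ∀ X : Fin 4 → S, (X 0 = X 1 ∨ X 2 = X 3) →
            (s j).eval X = (t j).eval X := fun X hX => (hE X hX).symm
        have h1 : (t j).eval Y = z := key hz a _ _ hE' hS hT.1 hT.2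
        have h2 : (s j).eval Y = z := by
          rcases hS with h | h
          · exact eval_z hz _ _ 1 h rfl
          · exact eval_z hz _ _ 3 h rfl
        rw [h1, h2]
      ·
        push_neg at hT; push_neg at hS
        have hB : (t j).eval ![a, a, a, z] = (s j).eval ![a, a, a, z] :=
          hE _ (Or.inl rfl)
        have hct : (t j).eval Y = (t j).eval ![a, a, a, z] := by
          apply eval_congr
          intro i hi
          fin_cases i <;> first | rfl | exact absurd hi hT.1
        have hcs : (s j).eval Y = (s j).eval ![a, a, a, z] := by
          apply eval_congr
          intro i hi
          fin_cases i <;> first | rfl | exact absurd hi hS.1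
        rw [hct, hcs, hB]
  have := (H Y).mp hall
  have hY0 : Y 0 = a := rfl
  have hY1 : Y 1 = z := rfl
  rcases this with h | h
  · exact ha (by rw [← hY0, h, hY1])
  · exact ha h
end

section
/- Let S be a finite semigroup whose kernel K is a group (i.e., S is a homogroup) and suppose S ≠ K. Then there exist distinct α, β ∈ S with αx = βx and xα = xβ for all x ∈ K, OR the set M = {(x₁,x₂,x₃,x₄) ∈ S⁴ : x₁ = x₂ or x₃ = x₄} fails to be an algebraic set. (Equivalently: a homogroup which is an equational domain and has trivial relation ∼_K must equal its kernel, i.e., be a group.) -/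
/-- `spow b n = b^(n+1)` in a semigroup. -/
def spow {S : Type*} [Semigroup S] (b : S) : ℕ → S
  | 0 => b
  | n + 1 => spow b n * b

lemma spow_succ' {S : Type*} [Semigroup S] (b : S) (n : ℕ) :
    spow b (n + 1) = b * spow b n := by
  induction n with
  | zero => rfl
  | succ n ih =>
    show spow b (n + 1) * b = b * (spow b n * b)
    rw [ih, mul_assoc]

lemma spow_add {S : Type*} [Semigroup S] (b : S) (m n : ℕ) :
    spow b (m + n + 1) = spow b m * spow b n := by
  induction n with
  | zero => rfl
  | succ n ih =>
    show spow b (m + n + 1) * b = spow b m * (spow b n * b)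
    rw [ih, mul_assoc]

/-- A finite homogroup (semigroup whose kernel `K` is a group) with `S ≠ K` either has two
distinct `K`-equivalent elements, or the set `M = {(x₁,x₂,x₃,x₄) : x₁ = x₂ or x₃ = x₄}`
fails to be algebraic. -/
theorem stmt19 {S : Type*} [Semigroup S] [Finite S] (K : Set S)
    (hK : ∀ s : S, ∀ a ∈ K, s * a ∈ K ∧ a * s ∈ K)
    (hKne : K.Nonempty)
    (hmin : ∀ T : Set S, T.Nonempty →
      (∀ s : S, ∀ a ∈ T, s * a ∈ T ∧ a * s ∈ T) → K ⊆ T)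
    (e : S) (he : e ∈ K)
    (hid : ∀ k ∈ K, e * k = k ∧ k * e = k)
    (hinv : ∀ k ∈ K, ∃ k' ∈ K, k * k' = e ∧ k' * k = e)
    (hne : K ≠ Set.univ) :
    (∃ α β : S, α ≠ β ∧ ∀ x ∈ K, α * x = β * x ∧ x * α = x * β) ∨
    ¬∃ (ι : Type) (t s : ι → SemigroupTerm S 4),
      ∀ X : Fin 4 → S,
        (∀ j : ι, (t j).eval X = (s j).eval X) ↔ (X 0 = X 1 ∨ X 2 = X 3) := by
  by_cases hL : ∃ α β : S, α ≠ β ∧ ∀ x ∈ K, α * x = β * x ∧ x * α = x * β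
  · exact Or.inl hL
  exfalso
  -- triviality of the relation ∼_K
  have h : ∀ α β : S, (∀ x ∈ K, α * x = β * x ∧ x * α = x * β) → α = β := by
    intro α β hx
    by_contra hab
    exact hL ⟨α, β, hab, hx⟩
  -- an element outside K
  obtain ⟨b, hb⟩ : ∃ b : S, b ∉ K := by
    by_contra hall
    push_neg at hall
    exact hne (Set.eq_univ_of_forall hall)
  -- basic multiplication facts
  have hmul_e : ∀ u v : S, (u * v) * e = (u * e) * (v * e) := by
    intro u v
    have h1 : v * e ∈ K := (hK v e he).1
    calc (u * v) * e = u * (v * e) := mul_assoc _ _ _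
    _ = u * (e * (v * e)) := by rw [(hid _ h1).1]
    _ = (u * e) * (v * e) := by rw [← mul_assoc]
  have he_mul : ∀ u v : S, e * (u * v) = (e * u) * (e * v) := by
    intro u v
    have h1 : e * u ∈ K := (hK u e he).2
    calc e * (u * v) = (e * u) * v := (mul_assoc _ _ _).symm
    _ = ((e * u) * e) * v := by rw [(hid _ h1).2]
    _ = (e * u) * (e * v) := mul_assoc _ _ _
  -- powers stay in K
  have hKpow : ∀ x, x ∈ K → ∀ n, spow x n ∈ K := by
    intro x hx n
    induction n with
    | zero => exact hx
    | succ n ih => exact (hK x _ ih).2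
  -- every element of K has a power equal to e
  have horder : ∀ x ∈ K, ∃ n, spow x n = e := by
    intro x hx
    obtain ⟨i, j, hij, hval⟩ := Finite.exists_ne_map_eq_of_infinite (spow x)
    wlog hlt : i < j generalizing i j
    · exact this j i hij.symm hval.symm (by omega)
    obtain ⟨d, hd⟩ : ∃ d : ℕ, j = (d + i) + 1 := ⟨j - i - 1, by omega⟩
    have hsplit : spow x ((d + i) + 1) = spow x d * spow x i := spow_add x d i
    rw [hd, hsplit] at hval
    obtain ⟨k', hk', hkk', _⟩ := hinv (spow x i) (hKpow x hx i)
    refine ⟨d, ?_⟩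
    have h1 : spow x d * e = e := by
      calc spow x d * e = spow x d * (spow x i * k') := by rw [hkk']
      _ = (spow x d * spow x i) * k' := (mul_assoc _ _ _).symm
      _ = spow x i * k' := by rw [← hval]
      _ = e := hkk'
    calc spow x d = spow x d * e := ((hid _ (hKpow x hx d)).2).symm
    _ = e := h1
  -- if spow x n = e then spow x (n + (n+1)*t) = e
  have hee : e * e = e := (hid e he).1
  have hstable : ∀ (x : S) (n : ℕ), spow x n = e → ∀ t, spow x (n + (n + 1) * t) = e := by
    intro x n hn t
    induction t with
    | zero => simpa using hn
    | succ t ih =>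
      have harith : n + (n + 1) * (t + 1) = (n + (n + 1) * t) + n + 1 := by ring
      rw [harith, spow_add, ih, hn, hee]
  -- the two "shadows" of b in K
  set r := b * e with hr
  set l := e * b with hl
  have hrK : r ∈ K := (hK b e he).1
  have hlK : l ∈ K := (hK b e he).2
  -- key: eb ≠ be, otherwise b ∼ be
  have hrl : r ≠ l := by
    intro hrleq
    have hbr : b = r := by
      apply h
      intro x hx
      constructor
      · calc b * x = b * (e * x) := by rw [(hid _ hx).1]
        _ = (b * e) * x := (mul_assoc _ _ _).symm
      · calc x * b = (x * e) * b := by rw [(hid _ hx).2]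
        _ = x * (e * b) := mul_assoc _ _ _
        _ = x * (b * e) := by rw [← hl, ← hr, hrleq]
    exact hb (hbr ▸ hrK)
  -- spow b n * e = spow r n and e * spow b n = spow l n
  have hbe : ∀ n, spow b n * e = spow r n := by
    intro n
    induction n with
    | zero => rfl
    | succ n ih =>
      show (spow b n * b) * e = spow r n * r
      rw [hmul_e, ih]
  have heb : ∀ n, e * spow b n = spow l n := by
    intro n
    induction n with
    | zero => rfl
    | succ n ih =>
      show e * (spow b n * b) = spow l n * l
      rw [he_mul, ih]
  -- find a common exponent N with spow r N = e and spow l N = e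
  obtain ⟨nr, hnr⟩ := horder r hrK
  obtain ⟨nl, hnl⟩ := horder l hlK
  set N := nr + (nr + 1) * nl with hN
  have hrN : spow r N = e := hstable r nr hnr nl
  have hlN : spow l N = e := by
    have harith : N = nl + (nl + 1) * nr := by rw [hN]; ring
    rw [harith]
    exact hstable l nl hnl nr
  -- hence spow b N ∼ e, so spow b N = e
  have hbN : spow b N = e := by
    apply h
    intro x hx
    constructor
    · calc spow b N * x = spow b N * (e * x) := by rw [(hid _ hx).1]
      _ = (spow b N * e) * x := (mul_assoc _ _ _).symm
      _ = e * x := by rw [hbe, hrN]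
    · calc x * spow b N = (x * e) * spow b N := by rw [(hid _ hx).2]
      _ = x * (e * spow b N) := mul_assoc _ _ _
      _ = x * e := by rw [heb, hlN]
  -- then eb = b^(N+1) = be, contradiction
  apply hrl
  calc r = b * e := hr
  _ = b * spow b N := by rw [hbN]
  _ = spow b (N + 1) := (spow_succ' b N).symm
  _ = spow b N * b := rfl
  _ = e * b := by rw [hbN]
  _ = l := hl.symm
end
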